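/- arXiv:2406.19929 — 3 statements merged into one kernel-verified Lean document; each statement's English description precedes it below -/
import Mathlib

section
/- Let τ belong to class 𝒯 and let f: I → ℝ₊ be a nonnegative, non-increasing, integrable function. Then the function P_τ f given by P_τ f(x) = Σ_{i≥1} f(τ_i^{-1}(x)) / τ_i'(τ_i^{-1}(x)) · χ_{τ_i(I_i)}(x) is non-increasing on I. -/
open Set Filter MeasureTheory Topology

structure PCT where
  τ : ℝ → ℝ
  a : ℕ → ℝ
  b : ℕ → ℝ
  da : ℕ → ℝ
  maps_to : Set.MapsTo τ (Set.Icc 0 1) (Set.Icc 0 1)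
  lt : ∀ i, a i < b i
  sub : ∀ i, Set.Ioo (a i) (b i) ⊆ Set.Icc (0:ℝ) 1
  disj : Pairwise (Function.onFun Disjoint fun i => Set.Ioo (a i) (b i))
  null : volume (Set.Icc (0:ℝ) 1 \ ⋃ i, Set.Ioo (a i) (b i)) = 0
  mono : ∀ i, StrictMonoOn τ (Set.Ioo (a i) (b i))
  conv : ∀ i, ConvexOn ℝ (Set.Ioo (a i) (b i)) τ
  diff : ∀ i, ∀ x ∈ Set.Ioo (a i) (b i), DifferentiableAt ℝ τ x
  lim_zero : ∀ i, Filter.Tendsto τ (nhdsWithin (a i) (Set.Ioi (a i))) (nhds 0)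
  deriv_lim : ∀ i, Filter.Tendsto (deriv τ) (nhdsWithin (a i) (Set.Ioi (a i))) (nhds (da i))
  da_pos : ∀ i, 0 < da i
  sum_inv : Summable (fun i => 1 / da i)
  expand : (¬ AccPt (0:ℝ) (Filter.principal (Set.range a))) → ∃ i, a i = 0 ∧ 1 < da i

/-- The interval `(c,d)` follows a single sequence of branches under the first `n`
iterates of `τ`. -/
def IsBranchSeq (T : PCT) (n : ℕ) (c d : ℝ) : Prop :=
  c < d ∧ ∀ k < n, ∃ i, T.τ^[k] '' Set.Ioo c d ⊆ Set.Ioo (T.a i) (T.b i)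

/-- `(c,d)` is a maximal open interval on which `τ^n` is a single monotone branch,
i.e. an element of the partition `𝒫⁽ⁿ⁾`. -/
def IsBranchInterval (T : PCT) (n : ℕ) (c d : ℝ) : Prop :=
  IsBranchSeq T n c d ∧
    ∀ c' d', c' ≤ c → d ≤ d' → IsBranchSeq T n c' d' → c' = c ∧ d' = d

lemma da_le_deriv (T : PCT) (i : ℕ) {z : ℝ} (hz : z ∈ Set.Ioo (T.a i) (T.b i)) :
    T.da i ≤ deriv T.τ z := by
  refine le_of_tendsto (T.deriv_lim i) ?_
  filter_upwards [Ioo_mem_nhdsGT_of_mem (Set.left_mem_Ico.2 hz.1)] with t ht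
  exact (T.conv i).monotoneOn_deriv (T.diff i) ⟨ht.1, ht.2.trans hz.2⟩ hz ht.2.le

lemma a_mem (T : PCT) (i : ℕ) : T.a i ∈ Set.Icc (0:ℝ) 1 := by
  have h1 : T.a i ∈ closure (Set.Ioo (T.a i) (T.b i)) := by
    rw [closure_Ioo (T.lt i).ne]; exact ⟨le_refl _, (T.lt i).le⟩
  have h2 : closure (Set.Ioo (T.a i) (T.b i)) ⊆ Set.Icc (0:ℝ) 1 := by
    have := closure_mono (T.sub i)
    rwa [isClosed_Icc.closure_eq] at this
  exact h2 h1

/-- Theorem 2.1.6 (1). Let `τ ∈ 𝒯` and let `f : I → ℝ₊` be a nonnegative,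
non-increasing, integrable function. Then the function
`P_τ f(x) = Σ_{i≥1} f(τᵢ⁻¹ x) / τᵢ'(τᵢ⁻¹ x) · χ_{τᵢ(Iᵢ)}(x)` is non-increasing on `I`.
Here `φ i` is the inverse branch `τᵢ⁻¹` (with `φ i 0 = aᵢ`), `c i = τᵢ(bᵢ)` is the
right endpoint of the branch image (defined by continuity), and `g i` is the branch
derivative composed with the inverse branch (with value `τᵢ'(aᵢ)` at `0`). The sum is
taken in `[0,∞]`. -/
theorem frobeniusPerron_antitoneOn (T : PCT) (f : ℝ → ℝ)
    (hf0 : ∀ x ∈ Set.Icc (0:ℝ) 1, 0 ≤ f x)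
    (hfm : AntitoneOn f (Set.Icc (0:ℝ) 1))
    (hfi : MeasureTheory.IntegrableOn f (Set.Icc (0:ℝ) 1))
    (c : ℕ → ℝ)
    (hc : ∀ i, Filter.Tendsto T.τ (nhdsWithin (T.b i) (Set.Iio (T.b i))) (nhds (c i)))
    (φ : ℕ → ℝ → ℝ)
    (hφmem : ∀ i, ∀ y ∈ Set.Ioo 0 (c i), φ i y ∈ Set.Ioo (T.a i) (T.b i))
    (hφr : ∀ i, ∀ y ∈ Set.Ioo 0 (c i), T.τ (φ i y) = y)
    (hφl : ∀ i, ∀ x ∈ Set.Ioo (T.a i) (T.b i), φ i (T.τ x) = x)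
    (hφ0 : ∀ i, φ i 0 = T.a i)
    (g : ℕ → ℝ → ℝ)
    (hg : ∀ i, ∀ y ∈ Set.Ioo 0 (c i), g i y = deriv T.τ (φ i y))
    (hg0 : ∀ i, g i 0 = T.da i) :
    AntitoneOn
      (fun x => ∑' i : ℕ,
        Set.indicator (Set.Ico 0 (c i)) (fun y => ENNReal.ofReal (f (φ i y) / g i y)) x)
      (Set.Icc (0:ℝ) 1) := by
  intro x hx y hy hxy
  refine ENNReal.tsum_le_tsum fun i => ?_
  rcases eq_or_lt_of_le hxy with rfl | hlt
  · exact le_refl _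
  by_cases hyc : y ∈ Set.Ico 0 (c i)
  swap
  · rw [Set.indicator_of_notMem hyc]; exact zero_le
  have hy0 : (0:ℝ) < y := lt_of_le_of_lt hx.1 hlt
  have hyI : y ∈ Set.Ioo 0 (c i) := ⟨hy0, hyc.2⟩
  have hxc : x ∈ Set.Ico 0 (c i) := ⟨hx.1, hlt.trans hyc.2⟩
  rw [Set.indicator_of_mem hyc, Set.indicator_of_mem hxc]
  have hφy := hφmem i y hyI
  have hφyI : φ i y ∈ Set.Icc (0:ℝ) 1 := T.sub i hφy
  have hgy : g i y = deriv T.τ (φ i y) := hg i y hyI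
  have hda_y : T.da i ≤ g i y := hgy ▸ da_le_deriv T i hφy
  have hgy_pos : 0 < g i y := lt_of_lt_of_le (T.da_pos i) hda_y
  apply ENNReal.ofReal_le_ofReal
  rcases eq_or_lt_of_le hx.1 with hx0 | hx0
  · -- x = 0
    rw [← hx0, hφ0, hg0]
    have hfle : f (φ i y) ≤ f (T.a i) := hfm (a_mem T i) hφyI hφy.1.le
    exact div_le_div₀ (hf0 _ (a_mem T i)) hfle (T.da_pos i) hda_y
  · -- 0 < x
    have hxI : x ∈ Set.Ioo 0 (c i) := ⟨hx0, hxc.2⟩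
    have hφx := hφmem i x hxI
    have hφxI : φ i x ∈ Set.Icc (0:ℝ) 1 := T.sub i hφx
    have hgx : g i x = deriv T.τ (φ i x) := hg i x hxI
    have hφle : φ i x ≤ φ i y := by
      by_contra h
      push_neg at h
      have := T.mono i hφy hφx h
      rw [hφr i x hxI, hφr i y hyI] at this
      exact absurd this (not_lt.2 hlt.le)
    have hfle : f (φ i y) ≤ f (φ i x) := hfm hφxI hφyI hφle
    have hgle : g i x ≤ g i y := by
      rw [hgx, hgy]
      exact (T.conv i).monotoneOn_deriv (T.diff i) hφx hφy hφle
    have hgx_pos : 0 < g i x := lt_of_lt_of_le (T.da_pos i) (hgx ▸ da_le_deriv T i hφx)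
    exact div_le_div₀ (hf0 _ hφxI) hfle hgx_pos hgle
end

section
/- Let τ belong to class 𝒯. Then the set S = ⋃_{n=0}^∞ τ^{-n}({a_i, b_i : i = 1, 2, …}) of all preimages under iterates of τ of the partition endpoints is dense in [0,1]. -/
open Set Filter MeasureTheory Topology

lemma PCT.a_nonneg (T : PCT) (i : ℕ) : 0 ≤ T.a i := by
  by_contra h
  push_neg at h
  have h1 : T.a i < min (T.b i) 0 := lt_min (T.lt i) h
  have hm : (T.a i + min (T.b i) 0) / 2 ∈ Ioo (T.a i) (T.b i) := by
    constructor
    · linarith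
    · have := min_le_left (T.b i) 0
      linarith
  have h0 := (T.sub i hm).1
  have := min_le_right (T.b i) 0
  linarith

/-- slope is monotone in the right endpoint. -/
lemma PCT.slope_le (T : PCT) (i : ℕ) {u t q : ℝ} (hu : u ∈ Ioo (T.a i) (T.b i))
    (hq : q ∈ Ioo (T.a i) (T.b i)) (hut : u < t) (htq : t < q) :
    (T.τ t - T.τ u) / (t - u) ≤ (T.τ q - T.τ u) / (q - u) := by
  have h1 := (T.conv i).slope_mono_adjacent hu hq hut htq
  have htu : (0:ℝ) < t - u := by linarith
  have hqt : (0:ℝ) < q - t := by linarith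
  have hqu : (0:ℝ) < q - u := by linarith
  set s := (T.τ t - T.τ u) / (t - u) with hs
  have e1 : T.τ t - T.τ u = s * (t - u) := (div_mul_cancel₀ _ htu.ne').symm
  have e2 : s * (q - t) ≤ T.τ q - T.τ t := (le_div_iff₀ hqt).mp h1
  rw [le_div_iff₀ hqu]
  nlinarith

/-- slope is monotone in the left endpoint. -/
lemma PCT.slope_le_left (T : PCT) (i : ℕ) {u p q : ℝ} (hu : u ∈ Ioo (T.a i) (T.b i))
    (hq : q ∈ Ioo (T.a i) (T.b i)) (hup : u < p) (hpq : p < q) :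
    (T.τ q - T.τ u) / (q - u) ≤ (T.τ q - T.τ p) / (q - p) := by
  have h1 := (T.conv i).slope_mono_adjacent hu hq hup hpq
  have hpu : (0:ℝ) < p - u := by linarith
  have hqp : (0:ℝ) < q - p := by linarith
  have hqu : (0:ℝ) < q - u := by linarith
  set s := (T.τ q - T.τ p) / (q - p) with hs
  have e2 : T.τ q - T.τ p = s * (q - p) := (div_mul_cancel₀ _ hqp.ne').symm
  have e1 : T.τ p - T.τ u ≤ s * (p - u) := (div_le_iff₀ hpu).mp h1
  rw [div_le_iff₀ hqu]
  nlinarith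

lemma PCT.slope_tendsto (T : PCT) (i : ℕ) {q : ℝ} (hq : T.a i < q) :
    Tendsto (fun u => (T.τ q - T.τ u) / (q - u)) (𝓝[>] (T.a i))
      (𝓝 (T.τ q / (q - T.a i))) := by
  have h1 : Tendsto (fun u => T.τ q - T.τ u) (𝓝[>] (T.a i)) (𝓝 (T.τ q - 0)) :=
    tendsto_const_nhds.sub (T.lim_zero i)
  have h2 : Tendsto (fun u => q - u) (𝓝[>] (T.a i)) (𝓝 (q - T.a i)) :=
    (tendsto_const_nhds.sub tendsto_id).mono_left nhdsWithin_le_nhds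
  have := h1.div h2 (sub_ne_zero.mpr hq.ne')
  rw [sub_zero] at this
  exact this

lemma PCT.deriv_le_slope (T : PCT) (i : ℕ) {u q : ℝ} (hu : u ∈ Ioo (T.a i) (T.b i))
    (hq : q ∈ Ioo (T.a i) (T.b i)) (huq : u < q) :
    deriv T.τ u ≤ (T.τ q - T.τ u) / (q - u) := by
  have hd := (T.diff i u hu).hasDerivAt
  have hts : Tendsto (slope T.τ u) (𝓝[>] u) (𝓝 (deriv T.τ u)) :=
    (hasDerivAt_iff_tendsto_slope.mp hd).mono_left
      (nhdsWithin_mono _ (fun x hx => ne_of_gt hx))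
  refine le_of_tendsto hts ?_
  filter_upwards [Ioo_mem_nhdsGT_of_mem ⟨le_refl u, huq⟩] with t ht
  rw [slope_def_field]
  exact T.slope_le i hu hq ht.1 ht.2

/-- The derivative at the left endpoint bounds τ from below: τ q ≥ da i (q - a i). -/
lemma PCT.tau_lb (T : PCT) (i : ℕ) {q : ℝ} (hq : q ∈ Ioo (T.a i) (T.b i)) :
    T.da i * (q - T.a i) ≤ T.τ q := by
  have haq : T.a i < q := hq.1
  have hle : T.da i ≤ T.τ q / (q - T.a i) := by
    refine le_of_tendsto_of_tendsto (T.deriv_lim i) (T.slope_tendsto i haq) ?_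
    filter_upwards [Ioo_mem_nhdsGT_of_mem ⟨le_refl _, haq⟩] with u hu
    exact T.deriv_le_slope i ⟨hu.1, hu.2.trans hq.2⟩ hq hu.2
  exact (le_div_iff₀ (by linarith)).mp hle

lemma PCT.tau_pos (T : PCT) (i : ℕ) {q : ℝ} (hq : q ∈ Ioo (T.a i) (T.b i)) :
    0 < T.τ q :=
  lt_of_lt_of_le (mul_pos (T.da_pos i) (sub_pos.mpr hq.1)) (T.tau_lb i hq)

/-- Convexity estimate: the secant over `[p,q]` is at least the secant from `a i`:
`τ q * (q - p) ≤ (τ q - τ p) * (q - a i)`. -/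
lemma PCT.slope_ge_right (T : PCT) (i : ℕ) {p q : ℝ} (hp : p ∈ Ioo (T.a i) (T.b i))
    (hq : q ∈ Ioo (T.a i) (T.b i)) (hpq : p < q) :
    T.τ q * (q - p) ≤ (T.τ q - T.τ p) * (q - T.a i) := by
  have hqa : (0:ℝ) < q - T.a i := sub_pos.mpr hq.1
  have hqp : (0:ℝ) < q - p := sub_pos.mpr hpq
  have hle : T.τ q / (q - T.a i) ≤ (T.τ q - T.τ p) / (q - p) := by
    refine le_of_tendsto (T.slope_tendsto i hq.1) ?_
    filter_upwards [Ioo_mem_nhdsGT_of_mem ⟨le_refl _, hp.1⟩] with u hu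
    exact T.slope_le_left i ⟨hu.1, hu.2.trans hp.2⟩ hq hu.2 hpq
  exact (div_le_div_iff₀ hqa hqp).mp hle

/-- An interval avoiding all partition endpoints lies in a single branch. -/
lemma PCT.exists_branch (T : PCT) {p q : ℝ} (hpq : p < q) (hsub : Icc p q ⊆ Icc 0 1)
    (havoid : ∀ w ∈ Icc p q, w ∉ range T.a ∪ range T.b) :
    ∃ i, Icc p q ⊆ Ioo (T.a i) (T.b i) := by
  have hmeet : (Icc p q ∩ ⋃ i, Ioo (T.a i) (T.b i)).Nonempty := by
    by_contra h
    rw [Set.not_nonempty_iff_eq_empty] at h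
    have hsub2 : Icc p q ⊆ Icc 0 1 \ ⋃ i, Ioo (T.a i) (T.b i) := by
      intro w hw
      refine ⟨hsub hw, fun hmem => ?_⟩
      have : w ∈ Icc p q ∩ ⋃ i, Ioo (T.a i) (T.b i) := ⟨hw, hmem⟩
      rw [h] at this
      exact this
    have hle := (measure_mono hsub2).trans_eq T.null
    rw [Real.volume_Icc] at hle
    have : ENNReal.ofReal (q - p) = 0 := le_antisymm hle zero_le
    rw [ENNReal.ofReal_eq_zero] at this
    linarith
  obtain ⟨w, hwIcc, hwU⟩ := hmeet
  obtain ⟨i, hwi⟩ := mem_iUnion.mp hwU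
  refine ⟨i, fun v hv => ?_⟩
  constructor
  · by_contra hva
    push_neg at hva
    have hai : T.a i ∈ Icc p q := ⟨hv.1.trans hva, (le_of_lt hwi.1).trans hwIcc.2⟩
    exact havoid _ hai (Or.inl ⟨i, rfl⟩)
  · by_contra hvb
    push_neg at hvb
    have hbi : T.b i ∈ Icc p q := ⟨hwIcc.1.trans (le_of_lt hwi.2), hvb.trans hv.2⟩
    exact havoid _ hbi (Or.inr ⟨i, rfl⟩)

/-- Core dynamical lemma: no nondegenerate subinterval of `[0,1]` can avoid all
preimages of the partition endpoints. -/
lemma PCT.no_gap (T : PCT) {x y : ℝ} (hxy : x < y) (h01 : Icc x y ⊆ Icc (0:ℝ) 1)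
    (havoid : ∀ w ∈ Icc x y, ∀ m : ℕ, T.τ^[m] w ∉ range T.a ∪ range T.b) : False := by
  -- the invariant: images of [x,y] under iterates stay nondegenerate, inside [0,1],
  -- and avoid all endpoints under all further iterates
  have hP : ∀ n : ℕ, T.τ^[n] x < T.τ^[n] y ∧
      ∀ w ∈ Icc (T.τ^[n] x) (T.τ^[n] y),
        w ∈ Icc (0:ℝ) 1 ∧ ∀ m : ℕ, T.τ^[m] w ∉ range T.a ∪ range T.b := by
    intro n
    induction n with
    | zero =>
      simp only [Function.iterate_zero_apply]
      exact ⟨hxy, fun w hw => ⟨h01 hw, fun m => havoid w hw m⟩⟩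
    | succ n ih =>
      obtain ⟨hlt, hprop⟩ := ih
      obtain ⟨i, hIcc⟩ := T.exists_branch hlt (fun w hw => (hprop w hw).1)
        (fun w hw => by simpa using (hprop w hw).2 0)
      have hcont : ContinuousOn T.τ (Icc (T.τ^[n] x) (T.τ^[n] y)) := fun w hw =>
        ((T.diff i w (hIcc hw)).continuousAt).continuousWithinAt
      have hlt' : T.τ (T.τ^[n] x) < T.τ (T.τ^[n] y) :=
        T.mono i (hIcc ⟨le_refl _, hlt.le⟩) (hIcc ⟨hlt.le, le_refl _⟩) hlt
      constructor
      · rw [Function.iterate_succ_apply', Function.iterate_succ_apply']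
        exact hlt'
      · intro w hw
        rw [Function.iterate_succ_apply', Function.iterate_succ_apply'] at hw
        obtain ⟨w', hw', hww'⟩ := intermediate_value_Icc hlt.le hcont hw
        obtain ⟨hw01, hwav⟩ := hprop w' hw'
        constructor
        · rw [← hww']; exact T.maps_to hw01
        · intro m
          rw [← hww', ← Function.iterate_succ_apply]
          exact hwav (m + 1)
  -- choose branches
  have hbranch : ∀ n : ℕ, ∃ i, Icc (T.τ^[n] x) (T.τ^[n] y) ⊆ Ioo (T.a i) (T.b i) :=
    fun n => T.exists_branch (hP n).1 (fun w hw => ((hP n).2 w hw).1)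
      (fun w hw => by simpa using ((hP n).2 w hw).2 0)
  choose I hI using hbranch
  have hXmem : ∀ n, T.τ^[n] x ∈ Ioo (T.a (I n)) (T.b (I n)) :=
    fun n => hI n ⟨le_refl _, (hP n).1.le⟩
  have hYmem : ∀ n, T.τ^[n] y ∈ Ioo (T.a (I n)) (T.b (I n)) :=
    fun n => hI n ⟨(hP n).1.le, le_refl _⟩
  have hY1 : ∀ n, T.τ^[n] y ≤ 1 :=
    fun n => (((hP n).2 _ ⟨(hP n).1.le, le_refl _⟩).1).2
  have hXpos : ∀ n, 0 < T.τ^[n] x :=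
    fun n => lt_of_le_of_lt (T.a_nonneg (I n)) (hXmem n).1
  have hYpos : ∀ n, 0 < T.τ^[n] y := fun n => (hXpos n).trans (hP n).1
  have hYA : ∀ n, 0 < T.τ^[n] y - T.a (I n) := fun n => sub_pos.mpr (hYmem n).1
  -- σ and g
  set σ : ℕ → ℝ := fun n => (T.τ^[n] y - T.τ^[n] x) / T.τ^[n] y with hσdef
  set g : ℕ → ℝ := fun n => T.τ^[n] y / (T.τ^[n] y - T.a (I n)) with hgdef
  have hσpos : ∀ n, 0 < σ n := fun n => div_pos (sub_pos.mpr (hP n).1) (hYpos n)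
  have hσlt1 : ∀ n, σ n < 1 := fun n =>
    (div_lt_one (hYpos n)).mpr (by have := hXpos n; linarith)
  have hgpos : ∀ n, 0 < g n := fun n => div_pos (hYpos n) (hYA n)
  have hg1 : ∀ n, 1 ≤ g n := fun n =>
    (one_le_div (hYA n)).mpr (by have := T.a_nonneg (I n); linarith)
  -- the recurrence σ n * g n ≤ σ (n+1)
  have hσrec : ∀ n, σ n * g n ≤ σ (n + 1) := by
    intro n
    have h1 := T.slope_ge_right (I n) (hXmem n) (hYmem n) (hP n).1
    have hτY : 0 < T.τ (T.τ^[n] y) := T.tau_pos (I n) (hYmem n)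
    simp only [hσdef, hgdef, Function.iterate_succ_apply']
    rw [div_mul_div_comm, div_le_div_iff₀ (mul_pos (hYpos n) (hYA n)) hτY]
    nlinarith [mul_le_mul_of_nonneg_left h1 (hYpos n).le]
  -- summability of logs of g
  have hlogsum : ∀ n, ∑ k ∈ Finset.range n, Real.log (g k) ≤
      Real.log (σ n) - Real.log (σ 0) := by
    intro n
    induction n with
    | zero => simp
    | succ n ih =>
      rw [Finset.sum_range_succ]
      have hmul : σ n * g n ≤ σ (n + 1) := hσrec n
      have hstep : Real.log (σ n) + Real.log (g n) ≤ Real.log (σ (n + 1)) := by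
        rw [← Real.log_mul (hσpos n).ne' (hgpos n).ne']
        exact Real.log_le_log (mul_pos (hσpos n) (hgpos n)) hmul
      linarith
  have hsummable : Summable (fun n => Real.log (g n)) := by
    apply summable_of_sum_range_le (c := -Real.log (σ 0))
      (fun n => Real.log_nonneg (hg1 n))
    intro n
    have := Real.log_nonpos (hσpos n).le (hσlt1 n).le
    linarith [hlogsum n]
  have htend : Tendsto (fun n => Real.log (g n)) atTop (𝓝 0) :=
    hsummable.tendsto_atTop_zero
  -- eventual smallness of a (I n)
  have hevent : ∀ θ : ℝ, 0 < θ → ∃ n₀ : ℕ, ∀ n, n₀ ≤ n →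
      T.a (I n) < θ * T.τ^[n] y := by
    intro θ hθ
    have hlog : (0:ℝ) < Real.log (1 + θ) := Real.log_pos (by linarith)
    obtain ⟨n₀, hn₀⟩ := eventually_atTop.mp (htend.eventually_lt_const hlog)
    refine ⟨n₀, fun n hn => ?_⟩
    have hglt : g n < 1 + θ := by
      have := hn₀ n hn
      have h2 : Real.log (g n) < Real.log (1 + θ) := this
      by_contra hge
      push_neg at hge
      exact absurd (Real.log_le_log (by linarith) hge) (by linarith)
    have hYAn := hYA n
    have hAn := T.a_nonneg (I n)
    rw [hgdef] at hglt
    have h3 : T.τ^[n] y < (1 + θ) * (T.τ^[n] y - T.a (I n)) :=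
      (div_lt_iff₀ hYAn).mp hglt
    nlinarith
  -- final season: eventual geometric growth of τ^[n] y, contradiction with ≤ 1
  have hgrowth : ∀ ρ : ℝ, 1 < ρ → ∀ N : ℕ,
      (∀ n, N ≤ n → ρ * T.τ^[n] y ≤ T.τ^[n+1] y) → False := by
    intro ρ hρ N hgrow
    have hiter : ∀ k : ℕ, ρ ^ k * T.τ^[N] y ≤ T.τ^[N + k] y := by
      intro k
      induction k with
      | zero => simp
      | succ k ih =>
        have h1 : ρ * (ρ ^ k * T.τ^[N] y) ≤ ρ * T.τ^[N + k] y :=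
          mul_le_mul_of_nonneg_left ih (by linarith)
        have h2 := hgrow (N + k) (Nat.le_add_right _ _)
        calc ρ ^ (k + 1) * T.τ^[N] y = ρ * (ρ ^ k * T.τ^[N] y) := by ring
          _ ≤ ρ * T.τ^[N + k] y := h1
          _ ≤ T.τ^[N + k + 1] y := h2
          _ = T.τ^[N + (k + 1)] y := by congr 1
    obtain ⟨k, hk⟩ := pow_unbounded_of_one_lt (1 / T.τ^[N] y) hρ
    have h1 := hiter k
    have h2 := hY1 (N + k)
    have h3 := hYpos N
    rw [div_lt_iff₀ h3] at hk
    nlinarith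
  by_cases hacc : AccPt (0:ℝ) (𝓟 (range T.a))
  · -- all left endpoints are positive
    have hapos : ∀ i, 0 < T.a i := by
      intro i
      rcases (T.a_nonneg i).lt_or_eq with h | h
      · exact h
      · exfalso
        have hbi : 0 < T.b i := by have := T.lt i; linarith
        obtain ⟨v, ⟨hvU, hvC⟩, hv0⟩ := accPt_iff_nhds.mp hacc
          (Ioo (-T.b i) (T.b i)) (Ioo_mem_nhds (by linarith) hbi)
        obtain ⟨j, rfl⟩ := hvC
        have haj : 0 < T.a j := (T.a_nonneg j).lt_of_ne (Ne.symm hv0)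
        have hij : i ≠ j := by
          intro he
          rw [← he, ← h] at haj
          exact lt_irrefl 0 haj
        have hmin : T.a j < min (T.b i) (T.b j) := lt_min hvU.2 (T.lt j)
        set t := (T.a j + min (T.b i) (T.b j)) / 2 with ht
        have ht1 : t ∈ Ioo (T.a i) (T.b i) := by
          constructor
          · rw [← h]; have := T.a_nonneg j; have := min_le_left (T.b i) (T.b j); linarith
          · have := min_le_left (T.b i) (T.b j); linarith
        have ht2 : t ∈ Ioo (T.a j) (T.b j) := by
          constructor
          · linarith
          · have := min_le_right (T.b i) (T.b j); linarith
        exact Set.disjoint_left.mp (T.disj hij) ht1 ht2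
    -- all but finitely many branches have da > 2
    obtain ⟨N₂, hN₂⟩ := eventually_atTop.mp
      (T.sum_inv.tendsto_atTop_zero.eventually_lt_const (by norm_num : (0:ℝ) < 1/2))
    have hda2 : ∀ i, N₂ ≤ i → 2 < T.da i := by
      intro i hi
      have h1 := hN₂ i hi
      have h2 := T.da_pos i
      rw [div_lt_div_iff₀ h2 (by norm_num : (0:ℝ) < 2)] at h1
      linarith
    set η := (Finset.range (N₂ + 1)).inf' ⟨0, Finset.mem_range.mpr (Nat.succ_pos _)⟩ T.a
      with hη
    have hηpos : 0 < η := by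
      rw [hη]
      exact (Finset.lt_inf'_iff _).2 fun i _ => hapos i
    have hηle : ∀ i, T.a i < η → 2 < T.da i := by
      intro i hi
      rcases le_or_gt N₂ i with h | h
      · exact hda2 i h
      · exfalso
        have : η ≤ T.a i := Finset.inf'_le _ (Finset.mem_range.mpr (by omega))
        linarith
    set θ := min η (1/4 : ℝ) with hθ
    have hθpos : 0 < θ := lt_min hηpos (by norm_num)
    obtain ⟨n₀, hn₀⟩ := hevent θ hθpos
    refine hgrowth (3/2) (by norm_num) n₀ ?_
    intro n hn
    have h1 := hn₀ n hn
    have hY1n := hY1 n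
    have hYposn := hYpos n
    have hAη : T.a (I n) < η := by
      have : θ * T.τ^[n] y ≤ θ := by nlinarith
      have := min_le_left η (1/4 : ℝ)
      linarith
    have hda := hηle _ hAη
    have hA4 : T.a (I n) < T.τ^[n] y / 4 := by
      have h2 : θ * T.τ^[n] y ≤ (1/4) * T.τ^[n] y := by
        have := min_le_right η (1/4 : ℝ)
        nlinarith
      linarith
    have h3 := T.tau_lb (I n) (hYmem n)
    rw [Function.iterate_succ_apply']
    nlinarith [hYA n]
  · -- there is a branch at 0 with expansion
    obtain ⟨i₀, hi₀a, hi₀l⟩ := T.expand hacc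
    rw [accPt_iff_nhds] at hacc
    push_neg at hacc
    obtain ⟨U, hU, hU'⟩ := hacc
    obtain ⟨ε₁, hε₁, hball⟩ := Metric.mem_nhds_iff.mp hU
    set ε' := min (ε₁ / 2) (1/2 : ℝ) with hε'
    have hε'pos : 0 < ε' := lt_min (by linarith) (by norm_num)
    have hzero : ∀ i, T.a i < ε' → T.a i = 0 := by
      intro i hi
      have h1 : T.a i ∈ Metric.ball (0:ℝ) ε₁ := by
        rw [Metric.mem_ball, Real.dist_eq, sub_zero, abs_of_nonneg (T.a_nonneg i)]
        have := min_le_left (ε₁ / 2) (1/2 : ℝ)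
        linarith
      exact hU' _ ⟨hball h1, ⟨i, rfl⟩⟩
    have huniq : ∀ i, T.a i = 0 → i = i₀ := by
      intro i hi
      by_contra hne
      have hbi : 0 < T.b i := by have := T.lt i; rw [hi] at this; exact this
      have hbi₀ : 0 < T.b i₀ := by have := T.lt i₀; rw [hi₀a] at this; exact this
      set t := min (T.b i) (T.b i₀) / 2 with ht
      have htpos : 0 < t := by positivity
      have ht1 : t ∈ Ioo (T.a i) (T.b i) := by
        rw [hi]
        exact ⟨htpos, by have := min_le_left (T.b i) (T.b i₀); linarith⟩
      have ht2 : t ∈ Ioo (T.a i₀) (T.b i₀) := by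
        rw [hi₀a]
        exact ⟨htpos, by have := min_le_right (T.b i) (T.b i₀); linarith⟩
      exact Set.disjoint_left.mp (T.disj hne) ht1 ht2
    obtain ⟨n₀, hn₀⟩ := hevent ε' hε'pos
    refine hgrowth (T.da i₀) hi₀l n₀ ?_
    intro n hn
    have h1 := hn₀ n hn
    have hY1n := hY1 n
    have hYposn := hYpos n
    have hA0 : T.a (I n) = 0 := by
      apply hzero
      have : ε' * T.τ^[n] y ≤ ε' := by nlinarith
      linarith
    have hIn : I n = i₀ := huniq _ hA0
    have h3 := T.tau_lb (I n) (hYmem n)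
    rw [hIn, hi₀a] at h3
    rw [Function.iterate_succ_apply']
    linarith
  
/-- Proposition 2.1.8. Let `τ ∈ 𝒯`. The set
`S = ⋃ₙ τ⁻ⁿ({aᵢ, bᵢ : i ≥ 1})` of all preimages under iterates of `τ` of the partition
endpoints is dense in `[0,1]`. -/
theorem preimages_of_endpoints_dense (T : PCT) :
    Set.Icc (0:ℝ) 1 ⊆
      closure ((⋃ n : ℕ, T.τ^[n] ⁻¹' (Set.range T.a ∪ Set.range T.b)) ∩ Set.Icc 0 1) := by
  intro z hz
  rw [Metric.mem_closure_iff]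
  by_contra hcon
  push_neg at hcon
  obtain ⟨ε, hε, hfar⟩ := hcon
  have hz0 := hz.1
  have hz1 := hz.2
  set x := max 0 (z - ε/2) with hxdef
  set y := min 1 (z + ε/2) with hydef
  have hxy : x < y := by
    rw [hxdef, hydef, max_lt_iff, lt_min_iff, lt_min_iff]
    refine ⟨⟨by norm_num, by linarith⟩, ⟨by linarith, by linarith⟩⟩
  have hxy01 : Icc x y ⊆ Icc (0:ℝ) 1 := fun w hw =>
    ⟨le_trans (le_max_left _ _) hw.1, le_trans hw.2 (min_le_left _ _)⟩
  have havoid : ∀ w ∈ Icc x y, ∀ m : ℕ, T.τ^[m] w ∉ range T.a ∪ range T.b := by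
    intro w hw m hmem
    have hwS : w ∈ (⋃ n : ℕ, T.τ^[n] ⁻¹' (range T.a ∪ range T.b)) ∩ Icc (0:ℝ) 1 :=
      ⟨mem_iUnion.mpr ⟨m, hmem⟩, hxy01 hw⟩
    have h1 := hfar w hwS
    have h2 : z - ε/2 ≤ w := le_trans (le_max_right _ _) hw.1
    have h3 : w ≤ z + ε/2 := le_trans hw.2 (min_le_right _ _)
    rw [Real.dist_eq] at h1
    have h4 : |z - w| ≤ ε/2 := abs_le.mpr ⟨by linarith, by linarith⟩
    linarith
  exact T.no_gap hxy hxy01 havoid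
end

section
/- Let τ belong to class 𝒯. Then there exists n₀ ∈ ℕ such that for all n ≥ n₀, the infimum of the derivative of τ^n over all branch intervals of 𝒫^{(n)} satisfies inf (τ^n)' ≥ 2. -/
open Set Filter MeasureTheory Topology


namespace PCT

variable (T : PCT)

lemma a_nonneg_s10 (i : ℕ) : 0 ≤ T.a i := by
  by_contra h
  push_neg at h
  have hab : T.a i < min 0 (T.b i) := lt_min h (T.lt i)
  have hm : (T.a i + min 0 (T.b i)) / 2 ∈ Set.Ioo (T.a i) (T.b i) := by
    constructor
    · linarith
    · have := min_le_right (0:ℝ) (T.b i); linarith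
  have h0 := (T.sub i hm).1
  have := min_le_left (0:ℝ) (T.b i)
  linarith

lemma mem_pos {i : ℕ} {x : ℝ} (hx : x ∈ Set.Ioo (T.a i) (T.b i)) : 0 < x :=
  lt_of_le_of_lt (T.a_nonneg_s10 i) hx.1

lemma mem_le_one {i : ℕ} {x : ℝ} (hx : x ∈ Set.Ioo (T.a i) (T.b i)) : x ≤ 1 :=
  (T.sub i hx).2

lemma tau_nonneg {i : ℕ} {x : ℝ} (hx : x ∈ Set.Ioo (T.a i) (T.b i)) : 0 ≤ T.τ x := by
  refine le_of_tendsto (T.lim_zero i) ?_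
  filter_upwards [Ioo_mem_nhdsGT hx.1] with z hz
  exact (T.mono i ⟨hz.1, hz.2.trans hx.2⟩ hx hz.2).le

lemma tau_pos_s10 {i : ℕ} {x : ℝ} (hx : x ∈ Set.Ioo (T.a i) (T.b i)) : 0 < T.τ x := by
  have hz : (T.a i + x) / 2 ∈ Set.Ioo (T.a i) (T.b i) :=
    ⟨by linarith [hx.1], by linarith [hx.1, hx.2]⟩
  have h1 : T.τ ((T.a i + x) / 2) < T.τ x := T.mono i hz hx (by linarith [hx.1])
  have h2 : 0 ≤ T.τ ((T.a i + x) / 2) := T.tau_nonneg hz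
  linarith

lemma da_le_deriv {i : ℕ} {x : ℝ} (hx : x ∈ Set.Ioo (T.a i) (T.b i)) :
    T.da i ≤ deriv T.τ x := by
  refine le_of_tendsto (T.deriv_lim i) ?_
  filter_upwards [Ioo_mem_nhdsGT hx.1] with z hz
  exact (T.conv i).monotoneOn_deriv (T.diff i) ⟨hz.1, hz.2.trans hx.2⟩ hx hz.2.le

lemma deriv_pos {i : ℕ} {x : ℝ} (hx : x ∈ Set.Ioo (T.a i) (T.b i)) :
    0 < deriv T.τ x :=
  lt_of_lt_of_le (T.da_pos i) (T.da_le_deriv hx)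

lemma chord_le_deriv {i : ℕ} {x : ℝ} (hx : x ∈ Set.Ioo (T.a i) (T.b i)) :
    T.τ x / (x - T.a i) ≤ deriv T.τ x := by
  have hxa : (0:ℝ) < x - T.a i := by linarith [hx.1]
  have h1 : Tendsto (fun z => (T.τ x - T.τ z) / (x - z)) (𝓝[>] (T.a i))
      (𝓝 ((T.τ x - 0) / (x - T.a i))) := by
    refine Filter.Tendsto.div (tendsto_const_nhds.sub (T.lim_zero i))
      (tendsto_const_nhds.sub (Filter.tendsto_id.mono_left nhdsWithin_le_nhds)) hxa.ne'
  rw [sub_zero] at h1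
  refine le_of_tendsto h1 ?_
  filter_upwards [Ioo_mem_nhdsGT hx.1] with z hz
  have hzmem : z ∈ Set.Ioo (T.a i) (T.b i) := ⟨hz.1, hz.2.trans hx.2⟩
  have h2 := (T.conv i).slope_le_deriv hzmem hx hz.2 (T.diff i x hx)
  rwa [slope_def_field] at h2
  
lemma ratio_le_deriv {i : ℕ} {x : ℝ} (hx : x ∈ Set.Ioo (T.a i) (T.b i)) :
    T.τ x / x ≤ deriv T.τ x := by
  refine le_trans ?_ (T.chord_le_deriv hx)
  have hxa : (0:ℝ) < x - T.a i := by linarith [hx.1]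
  gcongr
  · exact T.tau_nonneg hx
  · linarith [T.a_nonneg_s10 i]

end PCT
section
variable (T : PCT)
namespace PCT

lemma branch_eq {i j : ℕ} {x : ℝ} (hi : x ∈ Set.Ioo (T.a i) (T.b i))
    (hj : x ∈ Set.Ioo (T.a j) (T.b j)) : i = j := by
  by_contra h
  exact Set.disjoint_left.mp (T.disj h) hi hj

lemma zero_branch_unique {i j : ℕ} (hi : T.a i = 0) (hj : T.a j = 0) : i = j := by
  have hbi : 0 < T.b i := hi ▸ T.lt i
  have hbj : 0 < T.b j := hj ▸ T.lt j
  have hm : 0 < min (T.b i) (T.b j) / 2 := by positivity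
  have h1 : min (T.b i) (T.b j) / 2 ∈ Set.Ioo (T.a i) (T.b i) :=
    ⟨hi ▸ hm, by have := min_le_left (T.b i) (T.b j); linarith [lt_min hbi hbj]⟩
  have h2 : min (T.b i) (T.b j) / 2 ∈ Set.Ioo (T.a j) (T.b j) :=
    ⟨hj ▸ hm, by have := min_le_right (T.b i) (T.b j); linarith [lt_min hbi hbj]⟩
  exact T.branch_eq h1 h2

lemma finite_slow : {i : ℕ | T.da i < 2}.Finite := by
  have h := T.sum_inv.tendsto_cofinite_zero
  have h2 : ∀ᶠ i in cofinite, dist (1 / T.da i) 0 < 1/2 :=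
    h.eventually (Metric.ball_mem_nhds 0 (by norm_num))
  rw [Filter.eventually_cofinite] at h2
  refine h2.subset fun i hi => ?_
  simp only [Set.mem_setOf_eq, Real.dist_eq, sub_zero, not_lt] at *
  have hd := T.da_pos i
  rw [abs_of_pos (by positivity)]
  rw [le_div_iff₀ hd]
  linarith

lemma exists_D : ∃ D : ℝ, 0 < D ∧ D ≤ 1 ∧ ∀ i, T.da i < 2 → D ≤ T.da i := by
  set F := T.finite_slow.toFinset with hF
  by_cases hne : F.Nonempty
  · refine ⟨min 1 (F.inf' hne T.da), lt_min one_pos ?_, min_le_left _ _, fun i hi => ?_⟩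
    · exact (Finset.lt_inf'_iff hne).mpr fun i _ => T.da_pos i
    · have hiF : i ∈ F := T.finite_slow.mem_toFinset.mpr hi
      exact (min_le_right _ _).trans (Finset.inf'_le _ hiF)
  · refine ⟨1, one_pos, le_refl _, fun i hi => ?_⟩
    exact absurd ⟨i, T.finite_slow.mem_toFinset.mpr hi⟩ hne

lemma exists_eps_lam : ∃ e0 lam : ℝ, 0 < e0 ∧ e0 ≤ 1/2 ∧ 1 < lam ∧ lam ≤ 2 ∧
    (∀ i, ∀ x ∈ Set.Ioo (T.a i) (T.b i), x < e0 → lam ≤ deriv T.τ x) ∧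
    (∀ i, T.da i < lam → e0 ≤ T.a i) := by
  by_cases hA : AccPt (0:ℝ) (Filter.principal (Set.range T.a))
  · -- branches accumulate at 0; no branch starts at 0
    have hne0 : ∀ i, T.a i ≠ 0 := by
      intro i hi0
      obtain ⟨y, ⟨hyU, j, rfl⟩, hyne⟩ :=
        accPt_iff_nhds.mp hA (Metric.ball 0 (T.b i)) (Metric.ball_mem_nhds 0 (hi0 ▸ T.lt i))
      have haj : 0 < T.a j := lt_of_le_of_ne (T.a_nonneg_s10 j) (Ne.symm hyne)
      have hajbi : T.a j < T.b i := by
        have := Metric.mem_ball.mp hyU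
        rw [Real.dist_eq, sub_zero, abs_of_pos haj] at this
        exact this
      have hij : j ≠ i := fun h => hyne (h ▸ hi0)
      set m := (T.a j + min (T.b i) (T.b j)) / 2 with hm
      have hjm : T.a j < min (T.b i) (T.b j) := lt_min hajbi (T.lt j)
      have h1 : m ∈ Set.Ioo (T.a j) (T.b j) :=
        ⟨by simp only [hm]; linarith, by have := min_le_right (T.b i) (T.b j); simp only [hm]; linarith⟩
      have h2 : m ∈ Set.Ioo (T.a i) (T.b i) :=
        ⟨by simp only [hm, hi0]; linarith, by have := min_le_left (T.b i) (T.b j); simp only [hm]; linarith⟩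
      exact hij (T.branch_eq h1 h2)
    set F := T.finite_slow.toFinset with hF
    by_cases hne : F.Nonempty
    · refine ⟨min (1/2) (F.inf' hne T.a), 2, ?_, min_le_left _ _, one_lt_two, le_refl _,
        ?_, ?_⟩
      · refine lt_min (by norm_num) ((Finset.lt_inf'_iff hne).mpr fun i _ =>
          lt_of_le_of_ne (T.a_nonneg_s10 i) (Ne.symm (hne0 i)))
      · intro i x hx hxe
        rcases le_or_gt 2 (T.da i) with h | h
        · exact h.trans (T.da_le_deriv hx)
        · have hiF : i ∈ F := T.finite_slow.mem_toFinset.mpr h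
          have : min (1/2) (F.inf' hne T.a) ≤ T.a i :=
            (min_le_right _ _).trans (Finset.inf'_le _ hiF)
          linarith [hx.1]
      · intro i hi
        have hiF : i ∈ F := T.finite_slow.mem_toFinset.mpr hi
        exact (min_le_right _ _).trans (Finset.inf'_le _ hiF)
    · refine ⟨1/2, 2, by norm_num, le_refl _, one_lt_two, le_refl _, ?_, ?_⟩
      · intro i x hx _
        rcases le_or_gt 2 (T.da i) with h | h
        · exact h.trans (T.da_le_deriv hx)
        · exact absurd ⟨i, T.finite_slow.mem_toFinset.mpr h⟩ hne
      · intro i hi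
        exact absurd ⟨i, T.finite_slow.mem_toFinset.mpr hi⟩ hne
  · -- there is an expanding branch at 0, isolated from other left endpoints
    obtain ⟨i0, hi0a, hi0d⟩ := T.expand hA
    rw [accPt_iff_nhds] at hA
    push_neg at hA
    obtain ⟨U, hU, hU0⟩ := hA
    obtain ⟨δ, hδ, hball⟩ := Metric.mem_nhds_iff.mp hU
    have hzero : ∀ j, T.a j < δ → T.a j = 0 := by
      intro j hj
      rcases eq_or_ne (T.a j) 0 with h | h
      · exact h
      · exact absurd (hU0 (T.a j) ⟨hball (by
          rw [Metric.mem_ball, Real.dist_eq, sub_zero, abs_of_nonneg (T.a_nonneg_s10 j)]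
          exact hj), ⟨j, rfl⟩⟩) h
    have huniq : ∀ j, T.a j = 0 → j = i0 := fun j hj => T.zero_branch_unique hj hi0a
    refine ⟨min (1/2) δ, min (T.da i0) 2, lt_min (by norm_num) hδ, min_le_left _ _,
      lt_min hi0d one_lt_two, min_le_right _ _, ?_, ?_⟩
    · intro i x hx hxe
      have hiδ : T.a i < δ := lt_of_lt_of_le (hx.1.trans hxe) (min_le_right _ _)
      have : i = i0 := huniq i (hzero i hiδ)
      subst this
      exact (min_le_left _ _).trans (T.da_le_deriv hx)
    · intro i hi
      have hii0 : i ≠ i0 := by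
        intro h; subst h
        exact absurd hi (not_lt.mpr (min_le_left _ _))
      have : ¬ (T.a i < δ) := fun h => hii0 (huniq i (hzero i h))
      push_neg at this
      exact (min_le_right _ _).trans this

end PCT
end
section
namespace PCT
variable (T : PCT)

/-- Packaged constants for the expansion estimate. -/
lemma exists_step : ∃ e0 lam gam nu rho : ℝ,
    0 < e0 ∧ e0 ≤ 1/2 ∧ 1 < lam ∧ lam ≤ 2 ∧
    0 < gam ∧ gam < 1 ∧ 1 < nu ∧ nu ≤ lam ∧ 0 < rho ∧
    (∀ i, ∀ x ∈ Set.Ioo (T.a i) (T.b i), rho ≤ deriv T.τ x) ∧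
    (∀ i, ∀ x ∈ Set.Ioo (T.a i) (T.b i), x < e0 → lam ≤ deriv T.τ x) ∧
    (∀ i, ∀ x ∈ Set.Ioo (T.a i) (T.b i), nu * (T.τ x / x) ^ gam ≤ deriv T.τ x) := by
  obtain ⟨D, hD0, hD1, hDlt⟩ := T.exists_D
  obtain ⟨e0, lam, he0, he05, hlam1, hlam2, hP2, hP3⟩ := T.exists_eps_lam
  have h1e : (0:ℝ) < 1 - e0 := by linarith
  set bet : ℝ := (1 - e0)⁻¹ with hbet_def
  have hbet0 : 0 < bet := by positivity
  have hbet1 : 1 < bet := by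
    rw [hbet_def, lt_inv_comm₀ one_pos h1e, inv_one]
    linarith
  set mu : ℝ := min lam bet with hmu_def
  have hmu1 : 1 < mu := lt_min hlam1 hbet1
  have hmu0 : (0:ℝ) < mu := one_pos.trans hmu1
  have hmuD : (1:ℝ) < mu / D := (one_lt_div hD0).mpr (lt_of_le_of_lt hD1 hmu1)
  have hmuD0 : (0:ℝ) < mu / D := one_pos.trans hmuD
  set w : ℝ := min 1 (Real.log bet / Real.log (mu / D)) with hw_def
  have hlogmuD : 0 < Real.log (mu / D) := Real.log_pos hmuD
  have hw0 : 0 < w := lt_min one_pos (div_pos (Real.log_pos hbet1) hlogmuD)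
  have h1w : (0:ℝ) < 1 + w := by linarith
  set sig : ℝ := w / (1 + w) with hsig_def
  have hsig0 : 0 < sig := div_pos hw0 h1w
  have hsig1 : sig < 1 := by
    rw [hsig_def, div_lt_one h1w]; linarith
  set gam : ℝ := 1 - sig with hgam_def
  have hgam0 : 0 < gam := by simp only [hgam_def]; linarith
  have hgam1 : gam < 1 := by simp only [hgam_def]; linarith
  set nu : ℝ := mu ^ sig with hnu_def
  have hnu0 : 0 < nu := Real.rpow_pos_of_pos hmu0 _
  have hnu1 : 1 < nu := (Real.one_lt_rpow_iff_of_pos hmu0).mpr (Or.inl ⟨hmu1, hsig0⟩)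
  have hnulam : nu ≤ lam := by
    calc nu = mu ^ sig := rfl
      _ ≤ mu ^ (1:ℝ) := Real.rpow_le_rpow_of_exponent_le hmu1.le hsig1.le
      _ = mu := Real.rpow_one mu
      _ ≤ lam := min_le_left _ _
  -- the key numeric inequality
  have hkey : mu ^ w ≤ bet * D ^ w := by
    have hlog : Real.log (mu / D) * w ≤ Real.log bet := by
      rw [mul_comm, ← le_div_iff₀ hlogmuD]
      exact min_le_right _ _
    have h2 : (mu / D) ^ w ≤ bet := by
      rw [Real.rpow_def_of_pos hmuD0]
      calc Real.exp (Real.log (mu / D) * w) ≤ Real.exp (Real.log bet) :=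
            Real.exp_le_exp.mpr hlog
        _ = bet := Real.exp_log hbet0
    calc mu ^ w = (mu / D * D) ^ w := by rw [div_mul_cancel₀ _ hD0.ne']
      _ = (mu / D) ^ w * D ^ w := Real.mul_rpow hmuD0.le hD0.le
      _ ≤ bet * D ^ w := by
          have := Real.rpow_nonneg hD0.le w
          exact mul_le_mul_of_nonneg_right h2 this
  set rho : ℝ := min D lam with hrho_def
  have hrho0 : 0 < rho := lt_min hD0 (one_pos.trans hlam1)
  refine ⟨e0, lam, gam, nu, rho, he0, he05, hlam1, hlam2, hgam0, hgam1, hnu1, hnulam,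
    hrho0, ?_, hP2, ?_⟩
  · intro i x hx
    rcases lt_or_ge (T.da i) 2 with h | h
    · exact ((min_le_left _ _).trans (hDlt i h)).trans (T.da_le_deriv hx)
    · exact ((min_le_right _ _).trans (hlam2.trans h)).trans (T.da_le_deriv hx)
  · intro i x hx
    set f := deriv T.τ x with hf_def
    set R := T.τ x / x with hR_def
    have hR0 : 0 < R := div_pos (T.tau_pos_s10 hx) (T.mem_pos hx)
    have hfR : R ≤ f := T.ratio_le_deriv hx
    have hRg0 : 0 ≤ R ^ gam := Real.rpow_nonneg hR0.le _
    rcases le_or_gt lam f with hfast | hslow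
    · rcases le_or_gt R lam with hRl | hRl
      · calc nu * R ^ gam ≤ lam ^ sig * R ^ gam :=
              mul_le_mul_of_nonneg_right
                (Real.rpow_le_rpow hmu0.le (min_le_left _ _) hsig0.le) hRg0
          _ ≤ lam ^ sig * lam ^ gam := by
              have := Real.rpow_nonneg (le_of_lt (one_pos.trans hlam1)) sig
              exact mul_le_mul_of_nonneg_left
                (Real.rpow_le_rpow hR0.le hRl hgam0.le) this
          _ = lam ^ (sig + gam) := (Real.rpow_add (one_pos.trans hlam1) _ _).symm
          _ = lam := by rw [show sig + gam = 1 by simp [hgam_def], Real.rpow_one]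
          _ ≤ f := hfast
      · calc nu * R ^ gam ≤ R ^ sig * R ^ gam := by
              refine mul_le_mul_of_nonneg_right ?_ hRg0
              exact Real.rpow_le_rpow hmu0.le ((min_le_left _ _).trans hRl.le) hsig0.le
          _ = R ^ (sig + gam) := (Real.rpow_add hR0 _ _).symm
          _ = R := by rw [show sig + gam = 1 by simp [hgam_def], Real.rpow_one]
          _ ≤ f := hfR
    · -- slow branch
      have hda : T.da i ≤ f := T.da_le_deriv hx
      have hdalam : T.da i < lam := lt_of_le_of_lt hda hslow
      have hae : e0 ≤ T.a i := hP3 i hdalam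
      have hDf : D ≤ f := (hDlt i (lt_of_lt_of_le hdalam hlam2)).trans hda
      have hx0 : 0 < x := T.mem_pos hx
      have hbetR : bet * R ≤ f := by
        have hxa : 0 < x - T.a i := by linarith [hx.1]
        have hhi : x - T.a i ≤ x * (1 - e0) := by
          have hx1 : x ≤ 1 := T.mem_le_one hx
          nlinarith
        have h4 : T.τ x / (x * (1 - e0)) ≤ T.τ x / (x - T.a i) := by
          gcongr
          exact T.tau_nonneg hx
        have h5 : bet * R = T.τ x / (x * (1 - e0)) := by
          have hne : x * (1 - e0) ≠ 0 := by positivity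
          rw [hbet_def, hR_def, eq_div_iff hne]
          field_simp
        rw [h5]
        exact h4.trans (T.chord_le_deriv hx)
      by_cases hcl : nu * R ^ gam ≤ D
      · exact hcl.trans hDf
      · push_neg at hcl
        have hsgw : sig = gam * w := by
          rw [hgam_def, hsig_def]
          field_simp
          ring
        suffices h : nu ≤ bet * R ^ sig by
          calc nu * R ^ gam ≤ bet * R ^ sig * R ^ gam :=
                mul_le_mul_of_nonneg_right h hRg0
            _ = bet * (R ^ sig * R ^ gam) := by ring
            _ = bet * R ^ (sig + gam) := by rw [Real.rpow_add hR0]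
            _ = bet * R := by rw [show sig + gam = 1 by simp [hgam_def], Real.rpow_one]
            _ ≤ f := hbetR
        have h1 : D / nu < R ^ gam := by
          rw [div_lt_iff₀ hnu0, mul_comm]
          exact hcl
        have hDnu0 : 0 < D / nu := div_pos hD0 hnu0
        have hRsig : R ^ sig = (R ^ gam) ^ w := by
          rw [hsgw, Real.rpow_mul hR0.le]
        have h2 : (D / nu) ^ w ≤ (R ^ gam) ^ w :=
          Real.rpow_le_rpow hDnu0.le h1.le hw0.le
        have h3 : nu ≤ bet * (D / nu) ^ w := by
          have hnuw : nu * nu ^ w = mu ^ w := by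
            rw [hnu_def, ← Real.rpow_mul hmu0.le, ← Real.rpow_add hmu0]
            congr 1
            rw [hsig_def]
            field_simp
          have hnw0 : 0 < nu ^ w := Real.rpow_pos_of_pos hnu0 _
          have e1 : bet * (D / nu) ^ w = bet * D ^ w / nu ^ w := by
            rw [Real.div_rpow hD0.le hnu0.le, mul_div_assoc]
          rw [e1, le_div_iff₀ hnw0, hnuw]
          exact hkey
        calc nu ≤ bet * (D / nu) ^ w := h3
          _ ≤ bet * (R ^ gam) ^ w := mul_le_mul_of_nonneg_left h2 hbet0.le
          _ = bet * R ^ sig := by rw [hRsig]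

end PCT
end
section
namespace PCT
variable (T : PCT)

lemma hasDerivAt_iterate (x : ℝ) :
    ∀ n : ℕ, (∀ k < n, ∃ i, T.τ^[k] x ∈ Set.Ioo (T.a i) (T.b i)) →
    HasDerivAt (T.τ^[n]) (∏ k ∈ Finset.range n, deriv T.τ (T.τ^[k] x)) x := by
  intro n
  induction n with
  | zero => intro _; simpa using hasDerivAt_id x
  | succ n ih =>
    intro h
    obtain ⟨i, hi⟩ := h n n.lt_succ_self
    have hd : HasDerivAt T.τ (deriv T.τ (T.τ^[n] x)) (T.τ^[n] x) :=
      (T.diff i _ hi).hasDerivAt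
    have hcomp := hd.comp x (ih fun k hk => h k (hk.trans n.lt_succ_self))
    rw [Finset.prod_range_succ, mul_comm, Function.iterate_succ']
    exact hcomp

lemma prod_ratio {gam nu : ℝ} (hgam0 : 0 < gam) (hnu0 : 0 < nu)
    (hstep : ∀ i, ∀ x ∈ Set.Ioo (T.a i) (T.b i), nu * (T.τ x / x) ^ gam ≤ deriv T.τ x)
    (x : ℝ) : ∀ n : ℕ, (∀ k < n, ∃ i, T.τ^[k] x ∈ Set.Ioo (T.a i) (T.b i)) →
    nu ^ n * (T.τ^[n] x / x) ^ gam ≤ ∏ k ∈ Finset.range n, deriv T.τ (T.τ^[k] x) := by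
  intro n
  induction n with
  | zero =>
    intro _
    simp only [Function.iterate_zero, id_eq, pow_zero, one_mul, Finset.range_zero,
      Finset.prod_empty]
    rcases eq_or_ne x 0 with rfl | hx
    · rw [div_zero, Real.zero_rpow hgam0.ne']
      exact zero_le_one
    · rw [div_self hx, Real.one_rpow]
  | succ n ih =>
    intro h
    obtain ⟨i, hi⟩ := h n n.lt_succ_self
    have hx0 : 0 < x := by
      obtain ⟨j, hj⟩ := h 0 (Nat.succ_pos n)
      exact T.mem_pos (by simpa using hj)
    have hxn0 : 0 < T.τ^[n] x := T.mem_pos hi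
    have hτ0 : 0 < T.τ (T.τ^[n] x) := T.tau_pos_s10 hi
    have hprev := ih (fun k hk => h k (hk.trans n.lt_succ_self))
    have hstepn := hstep i _ hi
    have hprod0 : (0:ℝ) ≤ ∏ k ∈ Finset.range n, deriv T.τ (T.τ^[k] x) := by
      refine le_trans ?_ hprev
      positivity
    have hmul := mul_le_mul hprev hstepn (by positivity) hprod0
    have e : (T.τ^[n] x / x) * (T.τ (T.τ^[n] x) / T.τ^[n] x) = T.τ (T.τ^[n] x) / x := by
      field_simp
    have e2 : (T.τ^[n+1] x / x) ^ gam
        = (T.τ^[n] x / x) ^ gam * (T.τ (T.τ^[n] x) / T.τ^[n] x) ^ gam := by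
      rw [Function.iterate_succ_apply', ← Real.mul_rpow (by positivity) (by positivity), e]
    rw [Finset.prod_range_succ]
    calc nu ^ (n+1) * (T.τ^[n+1] x / x) ^ gam
        = (nu ^ n * (T.τ^[n] x / x) ^ gam) * (nu * (T.τ (T.τ^[n] x) / T.τ^[n] x) ^ gam) := by
          rw [e2, pow_succ]; ring
      _ ≤ _ := hmul

lemma prod_lower {e0 lam gam nu rho : ℝ} (he0 : 0 < e0)
    (hgam0 : 0 < gam) (hnu1 : 1 < nu) (hnulam : nu ≤ lam) (hrho0 : 0 < rho)
    (hrho : ∀ i, ∀ x ∈ Set.Ioo (T.a i) (T.b i), rho ≤ deriv T.τ x)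
    (hP2 : ∀ i, ∀ x ∈ Set.Ioo (T.a i) (T.b i), x < e0 → lam ≤ deriv T.τ x)
    (hstep : ∀ i, ∀ x ∈ Set.Ioo (T.a i) (T.b i), nu * (T.τ x / x) ^ gam ≤ deriv T.τ x)
    (x : ℝ) (n : ℕ) (hn : 1 ≤ n)
    (hb : ∀ k < n, ∃ i, T.τ^[k] x ∈ Set.Ioo (T.a i) (T.b i)) :
    min nu (e0 ^ gam * rho) * nu ^ (n-1) ≤ ∏ k ∈ Finset.range n, deriv T.τ (T.τ^[k] x) := by
  classical
  have hnu0 : (0:ℝ) < nu := one_pos.trans hnu1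
  have hx0 : 0 < x := by
    obtain ⟨j, hj⟩ := hb 0 (by omega)
    exact T.mem_pos (by simpa using hj)
  have hx1 : x ≤ 1 := by
    obtain ⟨j, hj⟩ := hb 0 (by omega)
    exact T.mem_le_one (by simpa using hj)
  by_cases hex : ∃ t, t < n ∧ e0 ≤ T.τ^[t] x
  · obtain ⟨t0, ht0n, ht0⟩ := hex
    set t := Nat.findGreatest (fun k => k < n ∧ e0 ≤ T.τ^[k] x) n with ht_def
    obtain ⟨htn, hte⟩ : t < n ∧ e0 ≤ T.τ^[t] x :=
      Nat.findGreatest_spec (P := fun k => k < n ∧ e0 ≤ T.τ^[k] x) (le_of_lt ht0n) ⟨ht0n, ht0⟩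
    have hsplit : (∏ k ∈ Finset.range (t+1), deriv T.τ (T.τ^[k] x)) *
        (∏ k ∈ Finset.Ico (t+1) n, deriv T.τ (T.τ^[k] x))
        = ∏ k ∈ Finset.range n, deriv T.τ (T.τ^[k] x) :=
      Finset.prod_range_mul_prod_Ico _ (by omega)
    have h1 := T.prod_ratio hgam0 hnu0 hstep x t (fun k hk => hb k (by omega))
    have hre : e0 ≤ T.τ^[t] x / x := by
      rw [le_div_iff₀ hx0]
      nlinarith
    have h1' : nu ^ t * e0 ^ gam ≤ ∏ k ∈ Finset.range t, deriv T.τ (T.τ^[k] x) := by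
      refine le_trans ?_ h1
      exact mul_le_mul_of_nonneg_left (Real.rpow_le_rpow he0.le hre hgam0.le)
        (pow_nonneg hnu0.le t)
    have hft : rho ≤ deriv T.τ (T.τ^[t] x) := by
      obtain ⟨i, hi⟩ := hb t htn
      exact hrho i _ hi
    have h2 : ∀ k ∈ Finset.Ico (t+1) n, nu ≤ deriv T.τ (T.τ^[k] x) := by
      intro k hk
      rw [Finset.mem_Ico] at hk
      obtain ⟨i, hi⟩ := hb k hk.2
      have hxk : T.τ^[k] x < e0 := by
        by_contra hge
        push_neg at hge
        exact Nat.findGreatest_is_greatest (show t < k by omega) (le_of_lt hk.2)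
          ⟨hk.2, hge⟩
      exact hnulam.trans (hP2 i _ hi hxk)
    have h3 : nu ^ (n - (t+1)) ≤ ∏ k ∈ Finset.Ico (t+1) n, deriv T.τ (T.τ^[k] x) := by
      calc nu ^ (n - (t+1)) = ∏ _k ∈ Finset.Ico (t+1) n, nu := by
            rw [Finset.prod_const, Nat.card_Ico]
        _ ≤ _ := Finset.prod_le_prod (fun _ _ => hnu0.le) h2
    have he0g : (0:ℝ) ≤ e0 ^ gam := Real.rpow_nonneg he0.le _
    calc min nu (e0 ^ gam * rho) * nu ^ (n-1)
        ≤ (e0 ^ gam * rho) * nu ^ (n-1) :=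
          mul_le_mul_of_nonneg_right (min_le_right _ _) (pow_nonneg hnu0.le _)
      _ = (nu ^ t * e0 ^ gam) * rho * nu ^ (n - (t+1)) := by
          rw [show (n:ℕ) - 1 = t + (n - (t+1)) by omega, pow_add]
          ring
      _ ≤ ((∏ k ∈ Finset.range t, deriv T.τ (T.τ^[k] x)) * deriv T.τ (T.τ^[t] x)) *
            (∏ k ∈ Finset.Ico (t+1) n, deriv T.τ (T.τ^[k] x)) := by
          refine mul_le_mul (mul_le_mul h1' hft hrho0.le ?_) h3 (pow_nonneg hnu0.le _) ?_
          · refine le_trans ?_ h1'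
            positivity
          · have hp1 : (0:ℝ) ≤ ∏ k ∈ Finset.range t, deriv T.τ (T.τ^[k] x) := by
              refine le_trans ?_ h1'
              positivity
            exact mul_nonneg hp1 (hrho0.le.trans hft)
      _ = ∏ k ∈ Finset.range n, deriv T.τ (T.τ^[k] x) := by
          rw [← Finset.prod_range_succ, hsplit]
  · push_neg at hex
    have hall : ∀ k ∈ Finset.range n, nu ≤ deriv T.τ (T.τ^[k] x) := by
      intro k hk
      rw [Finset.mem_range] at hk
      obtain ⟨i, hi⟩ := hb k hk
      exact hnulam.trans (hP2 i _ hi (hex k hk))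
    calc min nu (e0 ^ gam * rho) * nu ^ (n-1)
        ≤ nu * nu ^ (n-1) :=
          mul_le_mul_of_nonneg_right (min_le_left _ _) (pow_nonneg hnu0.le _)
      _ = nu ^ n := by
          rw [← pow_succ']
          congr 1
          omega
      _ = ∏ _k ∈ Finset.range n, nu := by rw [Finset.prod_const, Finset.card_range]
      _ ≤ _ := Finset.prod_le_prod (fun _ _ => hnu0.le) hall

end PCT
end

/-- Theorem 2.1.10. Let `τ ∈ 𝒯`. Then there is `n₀ ∈ ℕ` such that for
all `n ≥ n₀` the derivative of `τⁿ` on every branch interval of `𝒫⁽ⁿ⁾` is at least `2`,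
i.e. `inf (τⁿ)' ≥ 2`. -/
theorem iterate_expanding (T : PCT) :
    ∃ n₀ : ℕ, ∀ n ≥ n₀, ∀ c d : ℝ, IsBranchInterval T n c d →
      ∀ x ∈ Set.Ioo c d, 2 ≤ deriv (T.τ^[n]) x := by
  obtain ⟨e0, lam, gam, nu, rho, he0, he05, hlam1, hlam2, hgam0, hgam1, hnu1, hnulam,
    hrho0, hrho, hP2, hstep⟩ := T.exists_step
  set C := min nu (e0 ^ gam * rho) with hC_def
  have hC0 : 0 < C := lt_min (one_pos.trans hnu1)
    (mul_pos (Real.rpow_pos_of_pos he0 _) hrho0)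
  obtain ⟨N, hN⟩ := pow_unbounded_of_one_lt (2 / C) hnu1
  refine ⟨N + 1, fun n hn c d hcd x hx => ?_⟩
  have hb : ∀ k < n, ∃ i, T.τ^[k] x ∈ Set.Ioo (T.a i) (T.b i) := by
    intro k hk
    obtain ⟨i, hi⟩ := hcd.1.2 k hk
    exact ⟨i, hi (Set.mem_image_of_mem _ hx)⟩
  rw [(T.hasDerivAt_iterate x n hb).deriv]
  have hmain := T.prod_lower he0 hgam0 hnu1 hnulam hrho0 hrho hP2 hstep x n (by omega) hb
  refine le_trans ?_ hmain
  have h1 : (2:ℝ) < C * nu ^ N := by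
    have := (div_lt_iff₀' hC0).mp hN
    linarith
  have h2 : nu ^ N ≤ nu ^ (n - 1) := pow_le_pow_right₀ hnu1.le (by omega)
  nlinarith
end
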